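/- Let A, B ⊆ {1, ..., l} be disjoint finite sets of naturals with |A ∪ B| = w odd, and let m be the median of A ∪ B. Define A' = (B + w) ∪ (B' + w + l) ∪ {1,...,w} ⊆ {1,...,2w+2l} if a bit b = 0 (and A' = (B + w) ∪ (B' + w + l) ∪ {2w+2l−w+1,...,2w+2l} if b = 1), and B'' = (A + w) ∪ (A'' + w + l), where (A, B) and (A'', B') are two instances over {1,...,l} each with w elements total. Then the median of A' ∪ B'' equals (median of A ∪ B) + w if b = 0, and equals (median of A'' ∪ B') + w + l if b = 1. -/

import Mathlib

/-- The median of a finite set of naturals of odd size 2N+1: its (N+1)-th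
smallest element. -/
def medianFs (S : Finset ℕ) : ℕ := (S.sort (· ≤ ·)).getD (S.card / 2) 0

lemma sort_union_of_lt (X Y : Finset ℕ) (h : ∀ x ∈ X, ∀ y ∈ Y, x < y) :
    (X ∪ Y).sort (· ≤ ·) = X.sort (· ≤ ·) ++ Y.sort (· ≤ ·) := by
  have hd : Disjoint X Y := Finset.disjoint_left.2 fun {a} ha hb =>
    absurd (h a ha a hb) (lt_irrefl a)
  refine (fun hp h1 h2 => List.Perm.eq_of_pairwise' (r := (· ≤ · : ℕ → ℕ → Prop)) h1 h2 hp) ?_ ?_ ?_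
  · rw [← Multiset.coe_eq_coe]
    have h1 : (((X ∪ Y).sort (· ≤ ·)) : Multiset ℕ) = (X ∪ Y).val := Finset.sort_eq _ _
    have h2 : ((X.sort (· ≤ ·)) : Multiset ℕ) = X.val := Finset.sort_eq _ _
    have h3 : ((Y.sort (· ≤ ·)) : Multiset ℕ) = Y.val := Finset.sort_eq _ _
    rw [h1, ← Multiset.coe_add] at *
    rw [h2, h3, ← Finset.disjUnion_eq_union X Y hd]; rfl
  · exact Finset.pairwise_sort _ _
  · rw [List.pairwise_append]
    refine ⟨Finset.pairwise_sort _ _, Finset.pairwise_sort _ _, fun a ha b hb => ?_⟩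
    exact (h a (by rwa [← Finset.mem_sort (α := ℕ) (· ≤ ·)]) b
      (by rwa [← Finset.mem_sort (α := ℕ) (· ≤ ·)])).le

lemma sort_image_add (X : Finset ℕ) (c : ℕ) :
    (X.image (· + c)).sort (· ≤ ·) = (X.sort (· ≤ ·)).map (· + c) := by
  refine (fun hp h1 h2 => List.Perm.eq_of_pairwise' (r := (· ≤ · : ℕ → ℕ → Prop)) h1 h2 hp) ?_ ?_ ?_
  · rw [← Multiset.coe_eq_coe]
    have h1 : (((X.image (· + c)).sort (· ≤ ·)) : Multiset ℕ) = (X.image (· + c)).val :=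
      Finset.sort_eq _ _
    have h2 : ((X.sort (· ≤ ·)) : Multiset ℕ) = X.val := Finset.sort_eq _ _
    rw [h1, ← Multiset.map_coe, h2,
      Finset.image_val_of_injOn (Set.InjOn.mono (Set.subset_univ _)
        (fun a _ b _ hab => by simpa using hab))]
  · exact Finset.pairwise_sort _ _
  · exact List.Pairwise.map _ (fun a b hab => by simpa using hab) (Finset.pairwise_sort _ _)

/-- Correctness of the inductive step of the Strategy-to-Median reduction.
Given two sub-instances (A, B) and (A₂, B₂) over {1,…,l}, each with w elements
in total (w odd), and a bit b, set
A' = (B + w) ∪ (B₂ + w + l) ∪ ({1,…,w} if b = 0, {2w+2l−w+1,…,2w+2l} if b = 1),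
B' = (A + w) ∪ (A₂ + w + l).
Then median(A' ∪ B') = median(A ∪ B) + w if b = 0,
and median(A' ∪ B') = median(A₂ ∪ B₂) + w + l if b = 1. -/
theorem strategy_to_median_step (l w : ℕ) (A B A₂ B₂ : Finset ℕ)
    (hA : A ⊆ Finset.Icc 1 l) (hB : B ⊆ Finset.Icc 1 l)
    (hA₂ : A₂ ⊆ Finset.Icc 1 l) (hB₂ : B₂ ⊆ Finset.Icc 1 l)
    (hAB : Disjoint A B) (hA₂B₂ : Disjoint A₂ B₂)
    (hw : (A ∪ B).card = w) (hw₂ : (A₂ ∪ B₂).card = w) (hodd : Odd w)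
    (b : Bool) :
    medianFs ((B.image (· + w) ∪ B₂.image (· + (w + l)) ∪
        (if b then Finset.Icc (2 * w + 2 * l - w + 1) (2 * w + 2 * l)
         else Finset.Icc 1 w)) ∪
      (A.image (· + w) ∪ A₂.image (· + (w + l)))) =
    (if b then medianFs (A₂ ∪ B₂) + w + l else medianFs (A ∪ B) + w) := by
  obtain ⟨k, hk⟩ := hodd
  set S := A ∪ B with hS
  set S₂ := A₂ ∪ B₂ with hS₂
  have hSl : S ⊆ Finset.Icc 1 l := Finset.union_subset hA hB
  have hS₂l : S₂ ⊆ Finset.Icc 1 l := Finset.union_subset hA₂ hB₂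
  have hlenS : (S.sort (· ≤ ·)).length = w := by rw [Finset.length_sort, hw]
  have hlenS₂ : (S₂.sort (· ≤ ·)).length = w := by rw [Finset.length_sort, hw₂]
  -- bounds on sorted elements
  have hmemS : ∀ x ∈ S, 1 ≤ x ∧ x ≤ l := fun x hx => by
    have := hSl hx; simp [Finset.mem_Icc] at this; exact this
  have hmemS₂ : ∀ x ∈ S₂, 1 ≤ x ∧ x ≤ l := fun x hx => by
    have := hS₂l hx; simp [Finset.mem_Icc] at this; exact this
  cases b
  · -- b = false : P = Icc 1 w
    simp only [Bool.false_eq_true, if_false]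
    set P := Finset.Icc 1 w with hP
    have hunion : (B.image (· + w) ∪ B₂.image (· + (w + l)) ∪ P) ∪
        (A.image (· + w) ∪ A₂.image (· + (w + l))) =
        (P ∪ S.image (· + w)) ∪ S₂.image (· + (w + l)) := by
      simp only [hS, hS₂, Finset.image_union]
      ac_rfl
    rw [hunion]
    have h1 : ∀ x ∈ P, ∀ y ∈ S.image (· + w), x < y := by
      intro x hx y hy
      simp only [Finset.mem_image] at hy
      obtain ⟨a, ha, rfl⟩ := hy
      have := (hmemS a ha).1
      have hxw : x ≤ w := (Finset.mem_Icc.1 hx).2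
      omega
    have h2 : ∀ x ∈ P ∪ S.image (· + w), ∀ y ∈ S₂.image (· + (w + l)), x < y := by
      intro x hx y hy
      simp only [Finset.mem_image] at hy
      obtain ⟨a, ha, rfl⟩ := hy
      have := (hmemS₂ a ha).1
      rcases Finset.mem_union.1 hx with hx | hx
      · have := (Finset.mem_Icc.1 hx).2; omega
      · simp only [Finset.mem_image] at hx
        obtain ⟨c, hc, rfl⟩ := hx
        have := (hmemS c hc).2; omega
    have hsort : ((P ∪ S.image (· + w)) ∪ S₂.image (· + (w + l))).sort (· ≤ ·) =
        (P.sort (· ≤ ·) ++ (S.sort (· ≤ ·)).map (· + w)) ++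
          ((S₂.sort (· ≤ ·)).map (· + (w + l))) := by
      rw [sort_union_of_lt _ _ h2, sort_union_of_lt _ _ h1, sort_image_add, sort_image_add]
    have hlenP : (P.sort (· ≤ ·)).length = w := by
      rw [Finset.length_sort, hP, Nat.card_Icc]; omega
    have hcard : ((P ∪ S.image (· + w)) ∪ S₂.image (· + (w + l))).card = 3 * w := by
      rw [← Finset.length_sort (· ≤ ·), hsort]
      simp [hlenP, hlenS, hlenS₂]; omega
    rw [medianFs, hcard, hsort]
    have hidx : 3 * w / 2 = 3 * k + 1 := by omega
    rw [hidx]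
    have hlt : 3 * k + 1 < ((P.sort (· ≤ ·) ++ (S.sort (· ≤ ·)).map (· + w)) ++
        ((S₂.sort (· ≤ ·)).map (· + (w + l)))).length := by
      simp [hlenP, hlenS, hlenS₂]; omega
    rw [List.getD_eq_getElem _ _ hlt,
      List.getElem_append_left (by simp [hlenP, hlenS]; omega),
      List.getElem_append_right (by simp [hlenP]; omega),
      List.getElem_map]
    have hidx2 : 3 * k + 1 - (P.sort (· ≤ ·)).length = w / 2 := by
      rw [hlenP]; omega
    simp only [hidx2]
    rw [medianFs, hw, List.getD_eq_getElem _ _ (by omega : w / 2 < (S.sort (· ≤ ·)).length)]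
  · -- b = true : P = Icc (w+2l+1) (2w+2l)
    simp only [if_true]
    set P := Finset.Icc (2 * w + 2 * l - w + 1) (2 * w + 2 * l) with hP
    have hunion : (B.image (· + w) ∪ B₂.image (· + (w + l)) ∪ P) ∪
        (A.image (· + w) ∪ A₂.image (· + (w + l))) =
        (S.image (· + w) ∪ S₂.image (· + (w + l))) ∪ P := by
      simp only [hS, hS₂, Finset.image_union]
      ac_rfl
    rw [hunion]
    have h1 : ∀ x ∈ S.image (· + w), ∀ y ∈ S₂.image (· + (w + l)), x < y := by
      intro x hx y hy
      simp only [Finset.mem_image] at hx hy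
      obtain ⟨a, ha, rfl⟩ := hy
      obtain ⟨c, hc, rfl⟩ := hx
      have := (hmemS₂ a ha).1
      have := (hmemS c hc).2
      omega
    have h2 : ∀ x ∈ S.image (· + w) ∪ S₂.image (· + (w + l)), ∀ y ∈ P, x < y := by
      intro x hx y hy
      have hy' := (Finset.mem_Icc.1 hy).1
      rcases Finset.mem_union.1 hx with hx | hx <;>
        · simp only [Finset.mem_image] at hx
          obtain ⟨c, hc, rfl⟩ := hx
          first
          | (have := (hmemS c hc).2; omega)
          | (have := (hmemS₂ c hc).2; omega)
    have hsort : ((S.image (· + w) ∪ S₂.image (· + (w + l))) ∪ P).sort (· ≤ ·) =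
        ((S.sort (· ≤ ·)).map (· + w) ++ ((S₂.sort (· ≤ ·)).map (· + (w + l)))) ++
          P.sort (· ≤ ·) := by
      rw [sort_union_of_lt _ _ h2, sort_union_of_lt _ _ h1, sort_image_add, sort_image_add]
    have hlenP : (P.sort (· ≤ ·)).length = w := by
      rw [Finset.length_sort, hP, Nat.card_Icc]; omega
    have hcard : ((S.image (· + w) ∪ S₂.image (· + (w + l))) ∪ P).card = 3 * w := by
      rw [← Finset.length_sort (· ≤ ·), hsort]
      simp [hlenP, hlenS, hlenS₂]; omega
    rw [medianFs, hcard, hsort]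
    have hidx : 3 * w / 2 = 3 * k + 1 := by omega
    rw [hidx]
    have hlt : 3 * k + 1 < (((S.sort (· ≤ ·)).map (· + w) ++
        ((S₂.sort (· ≤ ·)).map (· + (w + l)))) ++ P.sort (· ≤ ·)).length := by
      simp [hlenP, hlenS, hlenS₂]; omega
    rw [List.getD_eq_getElem _ _ hlt,
      List.getElem_append_left (by simp [hlenS, hlenS₂]; omega),
      List.getElem_append_right (by simp [hlenS]; omega),
      List.getElem_map]
    have hidx2 : 3 * k + 1 - ((S.sort (· ≤ ·)).map (· + w)).length = w / 2 := by
      rw [List.length_map, hlenS]; omega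
    simp only [hidx2]
    rw [medianFs, hw₂,
      List.getD_eq_getElem _ _ (by omega : w / 2 < (S₂.sort (· ≤ ·)).length), add_assoc]
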